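/- For every integer i ≥ 0, suppose M ⊆ F_i is Q^i-connected and is maximal among Q^i-connected subsets of E_i (i.e., no Q^i-connected subset of E_i strictly contains M). Then every point b ∈ E_i \ M satisfies d(b,M) > Q^{i+1}/3; in particular d(M, E_i \ M) > Q^{i+1}/3. -/
import Mathlib


open scoped ENNReal

/-- A level-`n` chunk of the error configuration `ε`. -/
def IsChunk {X : Type*} [MetricSpace X] (Q : ℝ) (ε : Set X) : ℕ → Set X → Prop
  | 0, C => ∃ x ∈ ε, C = {x}
  | n + 1, C => ∃ A B : Set X, IsChunk Q ε n A ∧ IsChunk Q ε n B ∧ Disjoint A B ∧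
      C = A ∪ B ∧ Metric.diam C ≤ Q ^ (n + 1) / 2

/-- `E_n`: the union of all level-`n` chunks of `ε`. -/
def Elevel {X : Type*} [MetricSpace X] (Q : ℝ) (ε : Set X) (n : ℕ) : Set X :=
  {x | ∃ C : Set X, IsChunk Q ε n C ∧ x ∈ C}

/-- `F_i = E_i \ E_{i+1}`. -/
def Flevel {X : Type*} [MetricSpace X] (Q : ℝ) (ε : Set X) (i : ℕ) : Set X :=
  Elevel Q ε i \ Elevel Q ε (i + 1)

/-- The distance `d(U,W) = inf {d(u,w) : u ∈ U, w ∈ W}` between two sets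
(valued in `ℝ≥0∞`, so that the infimum over an empty family is `∞`). -/
noncomputable def setEDist {X : Type*} [MetricSpace X] (U W : Set X) : ℝ≥0∞ :=
  ⨅ u ∈ U, ⨅ w ∈ W, edist u w

/-- `M` is `l`-connected: it is nonempty and cannot be partitioned into two nonempty
disjoint subsets that are more than `l` apart. -/
def IsLConnected {X : Type*} [MetricSpace X] (l : ℝ) (M : Set X) : Prop :=
  M.Nonempty ∧ ∀ M₁ M₂ : Set X, M₁.Nonempty → M₂.Nonempty → Disjoint M₁ M₂ →
    M₁ ∪ M₂ = M → setEDist M₁ M₂ ≤ ENNReal.ofReal l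

section Helpers

variable {X : Type*} [MetricSpace X] {Q : ℝ} {ε : Set X}

theorem chunk_subset : ∀ {n : ℕ} {C : Set X}, IsChunk Q ε n C → C ⊆ ε
  | 0, C, ⟨x, hx, hC⟩ => by subst hC; simpa using hx
  | n + 1, C, ⟨A, B, hA, hB, _, hC, _⟩ => by
      subst hC; exact Set.union_subset (chunk_subset hA) (chunk_subset hB)

theorem chunk_diam (hQ : 1 ≤ Q) :
    ∀ {n : ℕ} {C : Set X}, IsChunk Q ε n C → Metric.diam C ≤ Q ^ n / 2
  | 0, C, ⟨x, _, hC⟩ => by subst hC; simp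
  | n + 1, _, ⟨_, _, _, _, _, _, hd⟩ => hd

theorem Elevel_subset {n : ℕ} : Elevel Q ε n ⊆ ε := fun _ ⟨_, hC, hx⟩ => chunk_subset hC hx

theorem setEDist_le {U W : Set X} {u w : X} (hu : u ∈ U) (hw : w ∈ W) :
    setEDist U W ≤ edist u w :=
  le_trans (iInf₂_le u hu) (iInf₂_le w hw)

theorem setEDist_comm (U W : Set X) : setEDist U W = setEDist W U := by
  refine le_antisymm ?_ ?_ <;>
    exact le_iInf₂ fun w hw => le_iInf₂ fun u hu =>
      (setEDist_le hu hw).trans_eq (edist_comm _ _)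

theorem setEDist_mono_left {U U' W : Set X} (h : U' ⊆ U) : setEDist U W ≤ setEDist U' W :=
  le_iInf₂ fun u hu => le_iInf₂ fun w hw => setEDist_le (h hu) hw

theorem exists_le_of_biInf_le {α : Type*} {s : Set α} (hs : s.Finite) {f : α → ℝ≥0∞}
    {c : ℝ≥0∞} (hc : c ≠ ⊤) (h : ⨅ x ∈ s, f x ≤ c) : ∃ x ∈ s, f x ≤ c := by
  rcases s.eq_empty_or_nonempty with rfl | hne
  · simp only [Set.mem_empty_iff_false, not_false_eq_true, iInf_neg, iInf_top] at h
    exact absurd (top_le_iff.mp h) hc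
  · obtain ⟨a, ha, hmin⟩ := Set.exists_min_image s f hs hne
    exact ⟨a, ha, le_trans (le_iInf₂ hmin) h⟩

theorem isLConnected_insert {l : ℝ} {M : Set X} (hM : IsLConnected l M) {b x : X}
    (hbM : b ∉ M) (hx : x ∈ M) (hd : edist b x ≤ ENNReal.ofReal l) :
    IsLConnected l (insert b M) := by
  obtain ⟨hne, hconn⟩ := hM
  refine ⟨⟨b, Set.mem_insert _ _⟩, ?_⟩
  have key : ∀ N₁ N₂ : Set X, N₁.Nonempty → N₂.Nonempty → Disjoint N₁ N₂ →
      N₁ ∪ N₂ = insert b M → b ∈ N₁ → setEDist N₁ N₂ ≤ ENNReal.ofReal l := by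
    intro N₁ N₂ _ h2 hdisj hunion hb
    have hbN₂ : b ∉ N₂ := Set.disjoint_left.mp hdisj hb
    have hN₂M : N₂ ⊆ M := by
      intro y hy
      have hy' : y ∈ insert b M := hunion ▸ Set.mem_union_right _ hy
      rcases Set.mem_insert_iff.mp hy' with rfl | hyM
      · exact absurd hy hbN₂
      · exact hyM
    by_cases hA : (N₁ \ {b}).Nonempty
    · have hAM : N₁ \ {b} ⊆ M := by
        intro y ⟨hy1, hy2⟩
        have hy' : y ∈ insert b M := hunion ▸ Set.mem_union_left _ hy1
        rcases Set.mem_insert_iff.mp hy' with rfl | hyM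
        · exact absurd rfl hy2
        · exact hyM
      have hun : (N₁ \ {b}) ∪ N₂ = M := by
        apply Set.Subset.antisymm (Set.union_subset hAM hN₂M)
        intro y hyM
        have hy' : y ∈ N₁ ∪ N₂ := by rw [hunion]; exact Set.mem_insert_of_mem _ hyM
        rcases hy' with hy1 | hy2
        · exact Or.inl ⟨hy1, fun h => hbM (h ▸ hyM)⟩
        · exact Or.inr hy2
      have := hconn _ _ hA h2 (hdisj.mono_left Set.diff_subset) hun
      exact le_trans (setEDist_mono_left Set.diff_subset) this
    · have hxN₂ : x ∈ N₂ := by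
        have hx' : x ∈ N₁ ∪ N₂ := by rw [hunion]; exact Set.mem_insert_of_mem _ hx
        rcases hx' with hx1 | hx2
        · exact absurd ⟨x, hx1, fun h => hbM (Set.mem_singleton_iff.mp h ▸ hx)⟩ hA
        · exact hx2
      exact le_trans (setEDist_le hb hxN₂) hd
  intro M₁ M₂ h1 h2 hdisj hunion
  have hb : b ∈ M₁ ∪ M₂ := by rw [hunion]; exact Set.mem_insert _ _
  rcases hb with hb1 | hb2
  · exact key M₁ M₂ h1 h2 hdisj hunion hb1
  · rw [setEDist_comm]
    exact key M₂ M₁ h2 h1 hdisj.symm (by rw [Set.union_comm]; exact hunion) hb2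

end Helpers

theorem statement2 {X : Type*} [MetricSpace X] (Q : ℝ) (hQ : 6 ≤ Q)
    (ε : Set X) (hε : ε.Finite) (i : ℕ) (M : Set X)
    (hM : M ⊆ Flevel Q ε i) (hconn : IsLConnected (Q ^ i) M)
    (hmax : ∀ M' : Set X, M' ⊆ Elevel Q ε i → IsLConnected (Q ^ i) M' → M ⊆ M' → M' = M) :
    (∀ b ∈ Elevel Q ε i \ M, ENNReal.ofReal (Q ^ (i + 1) / 3) < setEDist {b} M) ∧
      ENNReal.ofReal (Q ^ (i + 1) / 3) < setEDist M (Elevel Q ε i \ M) := by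
  have hQ0 : (0:ℝ) < Q := lt_of_lt_of_le (by norm_num) hQ
  have hQ1 : (1:ℝ) ≤ Q := by linarith
  have hpowpos : (0:ℝ) < Q ^ i := pow_pos hQ0 i
  have hMsub : M ⊆ Elevel Q ε i := fun x hx => (hM hx).1
  have hMfin : M.Finite := hε.subset (fun x hx => Elevel_subset (hMsub hx))
  have hc_ne : (ENNReal.ofReal (Q ^ (i + 1) / 3)) ≠ ⊤ := ENNReal.ofReal_ne_top
  have hc_nonneg : (0:ℝ) ≤ Q ^ (i + 1) / 3 := by positivity
  have part1 : ∀ b ∈ Elevel Q ε i \ M,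
      ENNReal.ofReal (Q ^ (i + 1) / 3) < setEDist {b} M := by
    intro b hb
    by_contra hle
    push_neg at hle
    have hle' : (⨅ w ∈ M, edist b w) ≤ ENNReal.ofReal (Q ^ (i + 1) / 3) := by
      refine le_trans ?_ hle
      simp [setEDist]
    obtain ⟨x, hxM, hx⟩ := exists_le_of_biInf_le hMfin hc_ne hle'
    have hdistbx : dist b x ≤ Q ^ (i + 1) / 3 := by
      rw [edist_dist] at hx
      exact (ENNReal.ofReal_le_ofReal_iff hc_nonneg).mp hx
    obtain ⟨C, hC, hbC⟩ := hb.1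
    obtain ⟨D, hD, hxD⟩ := (hM hxM).1
    have hxE1 : x ∉ Elevel Q ε (i + 1) := (hM hxM).2
    have hdiamC := chunk_diam hQ1 hC
    have hdiamD := chunk_diam hQ1 hD
    by_cases hdis : Disjoint C D
    · have hdiamU : Metric.diam (C ∪ D) ≤ Q ^ (i + 1) / 2 := by
        have h1 : Metric.diam (C ∪ D) ≤ Metric.diam C + dist b x + Metric.diam D :=
          Metric.diam_union hbC hxD
        have hpow : Q ^ (i + 1) = Q ^ i * Q := pow_succ Q i
        nlinarith [hpowpos]
      exact hxE1 ⟨C ∪ D, ⟨C, D, hC, hD, hdis, rfl, hdiamU⟩, Or.inr hxD⟩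
    · obtain ⟨y, hyC, hyD⟩ := Set.not_disjoint_iff.mp hdis
      have hCbd : Bornology.IsBounded C := (hε.subset (chunk_subset hC)).isBounded
      have hDbd : Bornology.IsBounded D := (hε.subset (chunk_subset hD)).isBounded
      have hbx : dist b x ≤ Q ^ i := by
        have h1 : dist b y ≤ Metric.diam C := Metric.dist_le_diam_of_mem hCbd hbC hyC
        have h2 : dist y x ≤ Metric.diam D := Metric.dist_le_diam_of_mem hDbd hyD hxD
        have h3 : dist b x ≤ dist b y + dist y x := dist_triangle b y x
        linarith
      have hed : edist b x ≤ ENNReal.ofReal (Q ^ i) := by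
        rw [edist_dist]
        exact ENNReal.ofReal_le_ofReal hbx
      have hconn' : IsLConnected (Q ^ i) (insert b M) :=
        isLConnected_insert hconn hb.2 hxM hed
      have hsub' : insert b M ⊆ Elevel Q ε i := Set.insert_subset hb.1 hMsub
      have := hmax (insert b M) hsub' hconn' (Set.subset_insert _ _)
      exact hb.2 (this ▸ Set.mem_insert b M)
  refine ⟨part1, ?_⟩
  by_contra hle
  push_neg at hle
  have hle' : (⨅ u ∈ M, ⨅ w ∈ Elevel Q ε i \ M, edist u w) ≤
      ENNReal.ofReal (Q ^ (i + 1) / 3) := hle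
  obtain ⟨u, huM, hu⟩ := exists_le_of_biInf_le hMfin hc_ne hle'
  have hSfin : (Elevel Q ε i \ M).Finite :=
    hε.subset (fun x hx => Elevel_subset hx.1)
  obtain ⟨w, hwS, hw⟩ := exists_le_of_biInf_le hSfin hc_ne hu
  have h1 : setEDist {w} M ≤ edist u w := by
    refine le_trans (setEDist_le (Set.mem_singleton w) huM) ?_
    rw [edist_comm]
  exact absurd (lt_of_lt_of_le (part1 w hwS) (le_trans h1 hw)) (lt_irrefl _)
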